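/- Let ν be a Lévy measure on ℝ^d ∖ {0}, i.e. ∫ min{|y|², 1} ν(dy) < ∞, and let Re ψ(ξ) := ∫_{y≠0} (1 − cos(ξ·y)) ν(dy). If there exist c > 0 and α ∈ (0,2) such that Re ψ(ξ) ≤ c |ξ|^α for all |ξ| ≤ 1, then ∫_{|y|≥1} |y|^{α−ε} ν(dy) < ∞ for every ε > 0. -/

import Mathlib

open MeasureTheory Filter Set
open scoped ENNReal Topology RealInnerProductSpace

noncomputable section


-- inner 1D integral lower bound
lemma aux_inner_bound {r t : ℝ} (hr : 0 < r) (ht : 2 / r ≤ |t|) :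
    ENNReal.ofReal (r / 2) ≤ ∫⁻ s in Ioc 0 r, ENNReal.ofReal (1 - Real.cos (s * t)) := by
  have ht0 : t ≠ 0 := by
    intro h; rw [h, abs_zero] at ht
    exact absurd ht (not_le.2 (by positivity))
  have hcont : Continuous fun s : ℝ => 1 - Real.cos (s * t) := by continuity
  have hint : IntegrableOn (fun s : ℝ => 1 - Real.cos (s * t)) (Ioc 0 r) := by
    exact hcont.integrableOn_Ioc
  have hnn : 0 ≤ᵐ[volume.restrict (Ioc 0 r)] fun s : ℝ => 1 - Real.cos (s * t) := by
    filter_upwards with s using sub_nonneg.2 (Real.cos_le_one _)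
  rw [← ofReal_integral_eq_lintegral_ofReal hint hnn]
  apply ENNReal.ofReal_le_ofReal
  have heq : ∫ s in Ioc 0 r, (1 - Real.cos (s * t)) = r - Real.sin (r * t) / t := by
    rw [← intervalIntegral.integral_of_le hr.le]
    have h1 : ∫ s in (0:ℝ)..r, Real.cos (s * t) = Real.sin (r * t) / t := by
      rw [intervalIntegral.integral_comp_mul_right Real.cos ht0]
      simp [Real.sin_zero, div_eq_inv_mul]
    have hic : IntervalIntegrable (fun s : ℝ => Real.cos (s * t)) volume 0 r :=
      (Real.continuous_cos.comp (continuous_id.mul continuous_const)).intervalIntegrable 0 r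
    rw [intervalIntegral.integral_sub intervalIntegrable_const hic, h1]
    simp
  rw [heq]
  have h2 : |Real.sin (r * t) / t| ≤ r / 2 := by
    rw [abs_div]
    have h3 : |Real.sin (r * t)| ≤ 1 := Real.abs_sin_le_one _
    have h4 : 2 / r ≤ |t| := ht
    have h5 : (0:ℝ) < |t| := lt_of_lt_of_le (by positivity) h4
    calc |Real.sin (r * t)| / |t| ≤ 1 / |t| := by gcongr
      _ ≤ 1 / (2 / r) := one_div_le_one_div_of_le (by positivity) h4
      _ = r / 2 := by field_simp
  linarith [le_of_abs_le h2]

lemma aux_tail_fin {d : ℕ} (ν : Measure (EuclideanSpace ℝ (Fin d)))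
    (hνint : (∫⁻ y, ENNReal.ofReal (min (‖y‖ ^ 2) 1) ∂ν) < ∞) :
    ν {y : EuclideanSpace ℝ (Fin d) | 1 ≤ ‖y‖} < ∞ := by
  set S : Set (EuclideanSpace ℝ (Fin d)) := {y | 1 ≤ ‖y‖} with hS
  have hSm : MeasurableSet S := (isClosed_le continuous_const continuous_norm).measurableSet
  have h1 : ν S = ∫⁻ y in S, 1 ∂ν := (setLIntegral_one S).symm
  rw [h1]
  calc ∫⁻ y in S, 1 ∂ν ≤ ∫⁻ y in S, ENNReal.ofReal (min (‖y‖ ^ 2) 1) ∂ν := by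
        apply setLIntegral_mono' hSm
        intro y hy
        have : min (‖y‖ ^ 2) 1 = 1 := min_eq_right (by nlinarith [hy.out])
        simp [this]
    _ ≤ ∫⁻ y, ENNReal.ofReal (min (‖y‖ ^ 2) 1) ∂ν := setLIntegral_le_lintegral _ _
    _ < ∞ := hνint

lemma aux_dir_bound {d : ℕ} (ν : Measure (EuclideanSpace ℝ (Fin d)))
    (hνint : (∫⁻ y, ENNReal.ofReal (min (‖y‖ ^ 2) 1) ∂ν) < ∞)
    (c α : ℝ) (hc : 0 < c) (hα0 : 0 < α)
    (hψ : ∀ ξ : EuclideanSpace ℝ (Fin d), ‖ξ‖ ≤ 1 →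
      (∫⁻ y, ENNReal.ofReal (1 - Real.cos ⟪ξ, y⟫) ∂ν) ≤ ENNReal.ofReal (c * ‖ξ‖ ^ α))
    (θ : EuclideanSpace ℝ (Fin d)) (hθ : ‖θ‖ = 1) {r : ℝ} (hr : 0 < r) (hr1 : r ≤ 1) :
    ν {y : EuclideanSpace ℝ (Fin d) | 2 / r ≤ |⟪θ, y⟫|} ≤ ENNReal.ofReal (2 * c * r ^ α) := by
  set S : Set (EuclideanSpace ℝ (Fin d)) := {y | 1 ≤ ‖y‖} with hSdef
  set B : Set (EuclideanSpace ℝ (Fin d)) := {y | 2 / r ≤ |⟪θ, y⟫|} with hBdef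
  have hBS : B ⊆ S := by
    intro y hy
    have h1 : |⟪θ, y⟫| ≤ ‖θ‖ * ‖y‖ := abs_real_inner_le_norm θ y
    have h2 : (2:ℝ) ≤ 2 / r := by
      rw [le_div_iff₀ hr]; linarith
    have := hy.out
    simp only [hSdef, Set.mem_setOf_eq]
    rw [hθ, one_mul] at h1
    linarith
  have hBm : MeasurableSet B := by
    apply (isClosed_le continuous_const _).measurableSet
    exact continuous_abs.comp (Continuous.inner continuous_const continuous_id)
  haveI : IsFiniteMeasure (ν.restrict S) :=
    ⟨by rw [Measure.restrict_apply_univ]; exact aux_tail_fin ν hνint⟩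
  have hgm : Measurable (Function.uncurry fun (y : EuclideanSpace ℝ (Fin d)) (s : ℝ) =>
      ENNReal.ofReal (1 - Real.cos (s * ⟪θ, y⟫))) := by
    apply Measurable.ennreal_ofReal
    apply Continuous.measurable
    exact continuous_const.sub (Real.continuous_cos.comp
      (continuous_snd.mul (Continuous.inner continuous_const continuous_fst)))
  have hswap : ∫⁻ y in S, (∫⁻ s in Ioc 0 r, ENNReal.ofReal (1 - Real.cos (s * ⟪θ, y⟫))) ∂ν
      = ∫⁻ s in Ioc 0 r, ∫⁻ y in S, ENNReal.ofReal (1 - Real.cos (s * ⟪θ, y⟫)) ∂ν := by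
    exact lintegral_lintegral_swap hgm.aemeasurable
  have hupper : ∫⁻ s in Ioc 0 r, ∫⁻ y in S, ENNReal.ofReal (1 - Real.cos (s * ⟪θ, y⟫)) ∂ν
      ≤ ENNReal.ofReal (c * r ^ α) * ENNReal.ofReal r := by
    calc ∫⁻ s in Ioc 0 r, ∫⁻ y in S, ENNReal.ofReal (1 - Real.cos (s * ⟪θ, y⟫)) ∂ν
        ≤ ∫⁻ _ in Ioc 0 r, ENNReal.ofReal (c * r ^ α) := by
          apply setLIntegral_mono' measurableSet_Ioc
          intro s hs
          have hs0 : 0 < s := hs.1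
          have hsr : s ≤ r := hs.2
          have hnorm : ‖s • θ‖ = s := by
            rw [norm_smul, hθ, mul_one, Real.norm_eq_abs, abs_of_pos hs0]
          have hb : ∫⁻ y, ENNReal.ofReal (1 - Real.cos ⟪s • θ, y⟫) ∂ν
              ≤ ENNReal.ofReal (c * ‖s • θ‖ ^ α) := hψ (s • θ) (by rw [hnorm]; linarith)
          calc ∫⁻ y in S, ENNReal.ofReal (1 - Real.cos (s * ⟪θ, y⟫)) ∂ν
              ≤ ∫⁻ y, ENNReal.ofReal (1 - Real.cos (s * ⟪θ, y⟫)) ∂ν :=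
                setLIntegral_le_lintegral _ _
            _ = ∫⁻ y, ENNReal.ofReal (1 - Real.cos ⟪s • θ, y⟫) ∂ν := by
                congr 1; ext y; rw [real_inner_smul_left]
            _ ≤ ENNReal.ofReal (c * ‖s • θ‖ ^ α) := hb
            _ ≤ ENNReal.ofReal (c * r ^ α) := by
                apply ENNReal.ofReal_le_ofReal
                rw [hnorm]
                exact mul_le_mul_of_nonneg_left
                  (Real.rpow_le_rpow hs0.le hsr hα0.le) hc.le
      _ = ENNReal.ofReal (c * r ^ α) * ENNReal.ofReal r := by
          rw [setLIntegral_const, Real.volume_Ioc, sub_zero]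
  have hlower : ENNReal.ofReal (r / 2) * ν B
      ≤ ∫⁻ y in S, (∫⁻ s in Ioc 0 r, ENNReal.ofReal (1 - Real.cos (s * ⟪θ, y⟫))) ∂ν := by
    calc ENNReal.ofReal (r / 2) * ν B
        = ∫⁻ _ in B, ENNReal.ofReal (r / 2) ∂ν := by rw [setLIntegral_const, mul_comm]
      _ ≤ ∫⁻ y in B, (∫⁻ s in Ioc 0 r, ENNReal.ofReal (1 - Real.cos (s * ⟪θ, y⟫))) ∂ν := by
          apply setLIntegral_mono' hBm
          intro y hy
          exact aux_inner_bound hr hy.out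
      _ ≤ ∫⁻ y in S, (∫⁻ s in Ioc 0 r, ENNReal.ofReal (1 - Real.cos (s * ⟪θ, y⟫))) ∂ν :=
          lintegral_mono_set hBS
  have hkey : ENNReal.ofReal (r / 2) * ν B ≤
      ENNReal.ofReal (r / 2) * ENNReal.ofReal (2 * c * r ^ α) := by
    calc ENNReal.ofReal (r / 2) * ν B
        ≤ ENNReal.ofReal (c * r ^ α) * ENNReal.ofReal r := le_trans (hlower.trans hswap.le) hupper
      _ = ENNReal.ofReal (r / 2) * ENNReal.ofReal (2 * c * r ^ α) := by
          rw [← ENNReal.ofReal_mul (by positivity), ← ENNReal.ofReal_mul (by positivity)]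
          ring_nf
  rwa [ENNReal.mul_le_mul_iff_right (by simp [ENNReal.ofReal_pos]; positivity) ENNReal.ofReal_ne_top]
    at hkey

lemma aux_norm_coord {d : ℕ} {R : ℝ} (hR : 0 < R) (y : EuclideanSpace ℝ (Fin d))
    (hy : R ≤ ‖y‖) : ∃ i : Fin d, R / Real.sqrt d ≤ |y i| := by
  by_contra h
  push_neg at h
  rcases Nat.eq_zero_or_pos d with hd | hd
  · subst hd
    have : y = 0 := Subsingleton.elim y 0
    rw [this, norm_zero] at hy
    linarith
  have hdpos : (0:ℝ) < d := by exact_mod_cast hd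
  have hsq : Real.sqrt d > 0 := Real.sqrt_pos.2 hdpos
  have hnormsq : ‖y‖ ^ 2 = ∑ i, ‖y i‖ ^ 2 := by
    rw [EuclideanSpace.norm_eq]
    rw [Real.sq_sqrt (Finset.sum_nonneg fun i _ => sq_nonneg _)]
  haveI : Nonempty (Fin d) := Fin.pos_iff_nonempty.1 hd
  have hlt : ∑ i, ‖y i‖ ^ 2 < ∑ _i : Fin d, (R / Real.sqrt d) ^ 2 := by
    apply Finset.sum_lt_sum_of_nonempty Finset.univ_nonempty
    intro i _
    have h1 : |y i| < R / Real.sqrt d := h i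
    have h2 : ‖y i‖ = |y i| := Real.norm_eq_abs _
    rw [h2]
    exact pow_lt_pow_left₀ h1 (abs_nonneg _) (by norm_num)
  have hsum : ∑ _i : Fin d, (R / Real.sqrt d) ^ 2 = R ^ 2 := by
    rw [Finset.sum_const, Finset.card_univ, Fintype.card_fin, nsmul_eq_mul]
    rw [div_pow, Real.sq_sqrt hdpos.le]
    field_simp
  have hR2 : R ^ 2 ≤ ‖y‖ ^ 2 := pow_le_pow_left₀ hR.le hy 2
  rw [hnormsq] at hR2
  rw [hsum] at hlt
  linarith

lemma aux_tail_bound {d : ℕ} (ν : Measure (EuclideanSpace ℝ (Fin d)))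
    (hνint : (∫⁻ y, ENNReal.ofReal (min (‖y‖ ^ 2) 1) ∂ν) < ∞)
    (c α : ℝ) (hc : 0 < c) (hα0 : 0 < α)
    (hψ : ∀ ξ : EuclideanSpace ℝ (Fin d), ‖ξ‖ ≤ 1 →
      (∫⁻ y, ENNReal.ofReal (1 - Real.cos ⟪ξ, y⟫) ∂ν) ≤ ENNReal.ofReal (c * ‖ξ‖ ^ α)) :
    ∃ C : ℝ, 0 < C ∧ ∀ R : ℝ, 1 ≤ R →
      ν {y : EuclideanSpace ℝ (Fin d) | R ≤ ‖y‖} ≤ ENNReal.ofReal (C * R ^ (-α)) := by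
  rcases Nat.eq_zero_or_pos d with hd | hd
  · refine ⟨1, one_pos, fun R hR => ?_⟩
    have : {y : EuclideanSpace ℝ (Fin d) | R ≤ ‖y‖} = ∅ := by
      ext y
      simp only [Set.mem_setOf_eq, Set.mem_empty_iff_false, iff_false, not_le]
      subst hd
      have : y = 0 := Subsingleton.elim y 0
      rw [this, norm_zero]; linarith
    rw [this, measure_empty]
    exact zero_le
  have hdpos : (0:ℝ) < d := by exact_mod_cast hd
  have hsq : (0:ℝ) < Real.sqrt d := Real.sqrt_pos.2 hdpos
  have hsq1 : (1:ℝ) ≤ Real.sqrt d := by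
    rw [show (1:ℝ) = Real.sqrt 1 by simp]
    exact Real.sqrt_le_sqrt (by exact_mod_cast hd)
  set D : ℝ := 2 * Real.sqrt d with hD
  have hD2 : (2:ℝ) ≤ D := by rw [hD]; nlinarith
  have hD0 : (0:ℝ) < D := by linarith
  set M : ℝ := (ν {y : EuclideanSpace ℝ (Fin d) | 1 ≤ ‖y‖}).toReal with hM
  have hM0 : 0 ≤ M := ENNReal.toReal_nonneg
  refine ⟨2 * c * d * D ^ α + M * D ^ α, by positivity, fun R hR => ?_⟩
  have hR0 : (0:ℝ) < R := by linarith
  rcases le_or_gt D R with hDR | hDR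
  · -- main case: R ≥ D
    set r : ℝ := D / R with hr
    have hr0 : 0 < r := by positivity
    have hr1 : r ≤ 1 := by rw [hr, div_le_one hR0]; exact hDR
    have h2r : 2 / r = R / Real.sqrt d := by
      rw [hr, hD]; field_simp
    have hsub : {y : EuclideanSpace ℝ (Fin d) | R ≤ ‖y‖} ⊆
        ⋃ i : Fin d, {y : EuclideanSpace ℝ (Fin d) | 2 / r ≤ |⟪EuclideanSpace.single i 1, y⟫|} := by
      intro y hy
      obtain ⟨i, hi⟩ := aux_norm_coord hR0 y hy.out
      refine Set.mem_iUnion.2 ⟨i, ?_⟩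
      simp only [Set.mem_setOf_eq, EuclideanSpace.inner_single_left, map_one, one_mul]
      rw [h2r]
      exact hi
    calc ν {y : EuclideanSpace ℝ (Fin d) | R ≤ ‖y‖}
        ≤ ν (⋃ i : Fin d, {y : EuclideanSpace ℝ (Fin d) |
            2 / r ≤ |⟪EuclideanSpace.single i 1, y⟫|}) := measure_mono hsub
      _ ≤ ∑' i : Fin d, ν {y : EuclideanSpace ℝ (Fin d) |
            2 / r ≤ |⟪EuclideanSpace.single i 1, y⟫|} := measure_iUnion_le _
      _ ≤ ∑' _i : Fin d, ENNReal.ofReal (2 * c * r ^ α) := by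
          apply ENNReal.tsum_le_tsum
          intro i
          exact aux_dir_bound ν hνint c α hc hα0 hψ (EuclideanSpace.single i 1)
            (by simp [EuclideanSpace.norm_single]) hr0 hr1
      _ = (d : ℝ≥0∞) * ENNReal.ofReal (2 * c * r ^ α) := by
          rw [tsum_fintype]
          simp [Finset.sum_const, Fintype.card_fin]
      _ ≤ ENNReal.ofReal ((2 * c * d * D ^ α + M * D ^ α) * R ^ (-α)) := by
          rw [show (d : ℝ≥0∞) = ENNReal.ofReal d by
            simp [ENNReal.ofReal_natCast], ← ENNReal.ofReal_mul (by positivity)]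
          apply ENNReal.ofReal_le_ofReal
          have hrα : r ^ α = D ^ α * R ^ (-α) := by
            rw [hr, Real.div_rpow hD0.le hR0.le, Real.rpow_neg hR0.le, div_eq_mul_inv]
          rw [hrα]
          have hRα : (0:ℝ) ≤ R ^ (-α) := Real.rpow_nonneg hR0.le _
          have hMD : 0 ≤ M * D ^ α * R ^ (-α) := by positivity
          nlinarith [Real.rpow_nonneg hD0.le α]
  · -- small R case
    calc ν {y : EuclideanSpace ℝ (Fin d) | R ≤ ‖y‖}
        ≤ ν {y : EuclideanSpace ℝ (Fin d) | 1 ≤ ‖y‖} := by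
          apply measure_mono; intro y hy; exact le_trans hR hy.out
      _ = ENNReal.ofReal M := by
          rw [hM, ENNReal.ofReal_toReal (aux_tail_fin ν hνint).ne]
      _ ≤ ENNReal.ofReal ((2 * c * d * D ^ α + M * D ^ α) * R ^ (-α)) := by
          apply ENNReal.ofReal_le_ofReal
          have h1 : D ^ (-α) ≤ R ^ (-α) := by
            apply Real.rpow_le_rpow_of_nonpos hR0 hDR.le (by linarith)
          have h2 : (0:ℝ) < D ^ α := Real.rpow_pos_of_pos hD0 _
          have h3 : M ≤ M * D ^ α * R ^ (-α) := by
            have h4 : D ^ α * D ^ (-α) = 1 := by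
              rw [← Real.rpow_add hD0]; simp
            calc M = M * (D ^ α * D ^ (-α)) := by rw [h4, mul_one]
              _ = M * D ^ α * D ^ (-α) := by ring
              _ ≤ M * D ^ α * R ^ (-α) := by
                  apply mul_le_mul_of_nonneg_left h1 (by positivity)
          have h5 : 0 ≤ 2 * c * d * D ^ α * R ^ (-α) := by
            have := Real.rpow_nonneg hR0.le (-α)
            positivity
          nlinarith

/-- **Lemma 5.1(iii)(b).** Let `ν` be a Lévy measure on `ℝ^d ∖ {0}` and
`Re ψ(ξ) = ∫ (1 - cos(ξ·y)) ν(dy)`. If `Re ψ(ξ) ≤ c |ξ|^α` for all `|ξ| ≤ 1` with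
`α ∈ (0,2)`, then `∫_{|y|≥1} |y|^{α-ε} ν(dy) < ∞` for every `ε > 0`. -/
theorem levy_measure_moment_at_infinity
    {d : ℕ} (ν : Measure (EuclideanSpace ℝ (Fin d))) (hν₀ : ν {0} = 0)
    (hνint : (∫⁻ y, ENNReal.ofReal (min (‖y‖ ^ 2) 1) ∂ν) < ∞)
    (c α : ℝ) (hc : 0 < c) (hα : α ∈ Set.Ioo (0:ℝ) 2)
    (hψ : ∀ ξ : EuclideanSpace ℝ (Fin d), ‖ξ‖ ≤ 1 →
      (∫⁻ y, ENNReal.ofReal (1 - Real.cos ⟪ξ, y⟫) ∂ν) ≤ ENNReal.ofReal (c * ‖ξ‖ ^ α))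
    (ε : ℝ) (hε : 0 < ε) :
    (∫⁻ y in {y : EuclideanSpace ℝ (Fin d) | 1 ≤ ‖y‖},
      ENNReal.ofReal (‖y‖ ^ (α - ε)) ∂ν) < ∞ := by
  have hSm : MeasurableSet {y : EuclideanSpace ℝ (Fin d) | 1 ≤ ‖y‖} :=
    (isClosed_le continuous_const continuous_norm).measurableSet
  have hSfin : ν {y : EuclideanSpace ℝ (Fin d) | 1 ≤ ‖y‖} < ∞ := aux_tail_fin ν hνint
  rcases le_or_gt (α - ε) 0 with hβ | hβ
  · -- exponent nonpositive: integrand bounded by 1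
    calc (∫⁻ y in {y : EuclideanSpace ℝ (Fin d) | 1 ≤ ‖y‖},
          ENNReal.ofReal (‖y‖ ^ (α - ε)) ∂ν)
        ≤ ∫⁻ _ in {y : EuclideanSpace ℝ (Fin d) | 1 ≤ ‖y‖}, 1 ∂ν := by
          apply setLIntegral_mono' hSm
          intro y hy
          calc ENNReal.ofReal (‖y‖ ^ (α - ε)) ≤ ENNReal.ofReal 1 :=
                ENNReal.ofReal_le_ofReal
                  (Real.rpow_le_one_of_one_le_of_nonpos hy.out hβ)
            _ = 1 := ENNReal.ofReal_one
      _ = ν {y : EuclideanSpace ℝ (Fin d) | 1 ≤ ‖y‖} := setLIntegral_one _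
      _ < ∞ := hSfin
  · -- exponent positive
    set β : ℝ := α - ε with hβdef
    obtain ⟨C, hC0, hC⟩ := aux_tail_bound ν hνint c α hc hα.1 hψ
    set A : ℕ → Set (EuclideanSpace ℝ (Fin d)) :=
      fun n => {y | (2:ℝ)^n ≤ ‖y‖ ∧ ‖y‖ < (2:ℝ)^(n+1)} with hA
    have hAm : ∀ n, MeasurableSet (A n) := by
      intro n
      apply MeasurableSet.inter
      · exact (isClosed_le continuous_const continuous_norm).measurableSet
      · exact (isOpen_lt continuous_norm continuous_const).measurableSet
    have hSA : {y : EuclideanSpace ℝ (Fin d) | 1 ≤ ‖y‖} ⊆ ⋃ n, A n := by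
      intro y hy
      have hy1 : 1 ≤ ‖y‖ := hy.out
      have hy0 : (0:ℝ) < ‖y‖ := by linarith
      set n : ℕ := ⌊Real.logb 2 ‖y‖⌋₊ with hn
      have hlb : 0 ≤ Real.logb 2 ‖y‖ := Real.logb_nonneg one_lt_two hy1
      refine Set.mem_iUnion.2 ⟨n, ?_, ?_⟩
      · have h1 : (n:ℝ) ≤ Real.logb 2 ‖y‖ := Nat.floor_le hlb
        calc (2:ℝ)^n = (2:ℝ)^(n:ℝ) := (Real.rpow_natCast 2 n).symm
          _ ≤ (2:ℝ)^(Real.logb 2 ‖y‖) := Real.rpow_le_rpow_of_exponent_le one_le_two h1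
          _ = ‖y‖ := Real.rpow_logb two_pos (by norm_num) hy0
      · have h2 : Real.logb 2 ‖y‖ < (n:ℝ) + 1 := Nat.lt_floor_add_one _
        calc ‖y‖ = (2:ℝ)^(Real.logb 2 ‖y‖) := (Real.rpow_logb two_pos (by norm_num) hy0).symm
          _ < (2:ℝ)^((n:ℝ)+1) := Real.rpow_lt_rpow_of_exponent_lt one_lt_two h2
          _ = (2:ℝ)^(n+1) := by
              rw [← Real.rpow_natCast 2 (n+1)]; push_cast; ring_nf
    -- geometric bound on each piece
    set q : ℝ≥0∞ := ENNReal.ofReal ((2:ℝ) ^ (-ε)) with hq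
    have hq1 : q < 1 := by
      rw [hq, ← ENNReal.ofReal_one]
      exact ENNReal.ofReal_lt_ofReal_iff_of_nonneg (by positivity) |>.2
        (Real.rpow_lt_one_of_one_lt_of_neg one_lt_two (by linarith))
    have hterm : ∀ n : ℕ, (∫⁻ y in A n, ENNReal.ofReal (‖y‖ ^ β) ∂ν)
        ≤ ENNReal.ofReal (C * (2:ℝ)^β) * q ^ n := by
      intro n
      have h2n1 : (1:ℝ) ≤ (2:ℝ)^n := one_le_pow₀ one_le_two
      have step1 : (∫⁻ y in A n, ENNReal.ofReal (‖y‖ ^ β) ∂ν)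
          ≤ ENNReal.ofReal (((2:ℝ)^(n+1)) ^ β) * ν (A n) := by
        calc (∫⁻ y in A n, ENNReal.ofReal (‖y‖ ^ β) ∂ν)
            ≤ ∫⁻ _ in A n, ENNReal.ofReal (((2:ℝ)^(n+1)) ^ β) ∂ν := by
              apply setLIntegral_mono' (hAm n)
              intro y hy
              exact ENNReal.ofReal_le_ofReal
                (Real.rpow_le_rpow (norm_nonneg _) hy.2.le hβ.le)
          _ = ENNReal.ofReal (((2:ℝ)^(n+1)) ^ β) * ν (A n) := by
              rw [setLIntegral_const, mul_comm]
      have step2 : ν (A n) ≤ ENNReal.ofReal (C * ((2:ℝ)^n) ^ (-α)) := by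
        calc ν (A n) ≤ ν {y : EuclideanSpace ℝ (Fin d) | (2:ℝ)^n ≤ ‖y‖} :=
              measure_mono (fun y hy => hy.1)
          _ ≤ ENNReal.ofReal (C * ((2:ℝ)^n) ^ (-α)) := hC _ h2n1
      have hid : ((2:ℝ)^(n+1)) ^ β * (C * ((2:ℝ)^n) ^ (-α))
          = (C * (2:ℝ)^β) * ((2:ℝ)^(-ε))^n := by
        have e1 : ((2:ℝ)^(n+1)) ^ β = (2:ℝ) ^ (((n:ℝ)+1)*β) := by
          rw [← Real.rpow_natCast (2:ℝ) (n+1), ← Real.rpow_mul (by norm_num)]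
          push_cast; ring_nf
        have e2 : ((2:ℝ)^n) ^ (-α) = (2:ℝ) ^ ((n:ℝ)*(-α)) := by
          rw [← Real.rpow_natCast (2:ℝ) n, ← Real.rpow_mul (by norm_num)]
        have e3 : ((2:ℝ)^(-ε) : ℝ)^n = (2:ℝ)^((-ε)*(n:ℝ)) := by
          rw [← Real.rpow_natCast ((2:ℝ)^(-ε)) n, ← Real.rpow_mul (by norm_num)]
        rw [e1, e2, e3]
        have e4 : ((n:ℝ)+1)*β + (n:ℝ)*(-α) = β + (-ε)*(n:ℝ) := by
          rw [hβdef]; ring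
        calc (2:ℝ) ^ (((n:ℝ)+1)*β) * (C * (2:ℝ) ^ ((n:ℝ)*(-α)))
            = C * ((2:ℝ) ^ (((n:ℝ)+1)*β) * (2:ℝ) ^ ((n:ℝ)*(-α))) := by ring
          _ = C * (2:ℝ) ^ (((n:ℝ)+1)*β + (n:ℝ)*(-α)) := by rw [← Real.rpow_add two_pos]
          _ = C * (2:ℝ) ^ (β + (-ε)*(n:ℝ)) := by rw [e4]
          _ = C * ((2:ℝ) ^ β * (2:ℝ) ^ ((-ε)*(n:ℝ))) := by rw [Real.rpow_add two_pos]
          _ = (C * (2:ℝ)^β) * (2:ℝ)^((-ε)*(n:ℝ)) := by ring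
      calc (∫⁻ y in A n, ENNReal.ofReal (‖y‖ ^ β) ∂ν)
          ≤ ENNReal.ofReal (((2:ℝ)^(n+1)) ^ β) * ENNReal.ofReal (C * ((2:ℝ)^n) ^ (-α)) :=
            le_trans step1 (mul_le_mul_right step2 _)
        _ = ENNReal.ofReal (((2:ℝ)^(n+1)) ^ β * (C * ((2:ℝ)^n) ^ (-α))) := by
            rw [← ENNReal.ofReal_mul (by positivity)]
        _ = ENNReal.ofReal ((C * (2:ℝ)^β) * ((2:ℝ)^(-ε))^n) := by rw [hid]
        _ = ENNReal.ofReal (C * (2:ℝ)^β) * q ^ n := by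
            rw [ENNReal.ofReal_mul (by positivity), ENNReal.ofReal_pow (by positivity)]
    calc (∫⁻ y in {y : EuclideanSpace ℝ (Fin d) | 1 ≤ ‖y‖},
          ENNReal.ofReal (‖y‖ ^ β) ∂ν)
        ≤ ∫⁻ y in ⋃ n, A n, ENNReal.ofReal (‖y‖ ^ β) ∂ν := lintegral_mono_set hSA
      _ ≤ ∑' n, ∫⁻ y in A n, ENNReal.ofReal (‖y‖ ^ β) ∂ν := lintegral_iUnion_le _ _
      _ ≤ ∑' n, ENNReal.ofReal (C * (2:ℝ)^β) * q ^ n := ENNReal.tsum_le_tsum hterm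
      _ = ENNReal.ofReal (C * (2:ℝ)^β) * ∑' n, q ^ n := ENNReal.tsum_mul_left
      _ = ENNReal.ofReal (C * (2:ℝ)^β) * (1 - q)⁻¹ := by rw [ENNReal.tsum_geometric]
      _ < ∞ := by
          apply ENNReal.mul_lt_top ENNReal.ofReal_lt_top
          rw [ENNReal.inv_lt_top]
          exact tsub_pos_of_lt hq1

end
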